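/- Let E be a real vector space, let n ≥ 1 and s ∈ {1,…,n}, and let γ > 0. Let x ∈ E and g_1,…,g_n ∈ E, and set g := (1/n)·∑_{i=1}^n g_i. Let Ω ⊆ {1,…,n} be any subset with |Ω| = s, and for each i ∈ Ω let x_i' ∈ E be arbitrary. Define, for i ∈ Ω, z_i := x + γ·g_i − γ·g and g_i' := (1/γ)·(z_i − x_i'); for i ∉ Ω define g_i' := g_i; and define x' := (1/s)·∑_{i∈Ω} x_i'. Then (1/n)·∑_{i=1}^n g_i' = ((n−s)/n)·g + (s/(n·γ))·(x − x'). -/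

import Mathlib

/-- Proposition 1 of the paper (one-step form): in Point-SAGA, the running average
of the gradient estimates can be updated in closed form. -/
theorem pointSAGA_average_update {E : Type*} [AddCommGroup E] [Module ℝ E]
    (n s : ℕ) (hn : 1 ≤ n) (hs1 : 1 ≤ s) (hsn : s ≤ n)
    (γ : ℝ) (hγ : 0 < γ)
    (x : E) (gi : Fin n → E) (g : E) (hg : g = (n : ℝ)⁻¹ • ∑ i, gi i)
    (Ω : Finset (Fin n)) (hΩ : Ω.card = s)
    (xi' : Fin n → E)
    (z : Fin n → E) (hz : ∀ i ∈ Ω, z i = x + γ • gi i - γ • g)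
    (gi' : Fin n → E)
    (hin : ∀ i ∈ Ω, gi' i = γ⁻¹ • (z i - xi' i))
    (hout : ∀ i ∉ Ω, gi' i = gi i)
    (x' : E) (hx' : x' = (s : ℝ)⁻¹ • ∑ i ∈ Ω, xi' i) :
    (n : ℝ)⁻¹ • ∑ i, gi' i
      = (((n : ℝ) - s) / n) • g + ((s : ℝ) / (n * γ)) • (x - x') := by
  have hn0 : (n : ℝ) ≠ 0 := by positivity
  have hs0 : (s : ℝ) ≠ 0 := by positivity
  have hγ0 : γ ≠ 0 := ne_of_gt hγ
  have hsum : ∑ i, gi i = (n : ℝ) • g := by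
    rw [hg, smul_smul, mul_inv_cancel₀ hn0, one_smul]
  have hxsum : ∑ i ∈ Ω, xi' i = (s : ℝ) • x' := by
    rw [hx', smul_smul, mul_inv_cancel₀ hs0, one_smul]
  have h1 : ∑ i ∈ Ω, gi' i
      = (s : ℝ) • (γ⁻¹ • x) + ∑ i ∈ Ω, gi i - (s : ℝ) • g - γ⁻¹ • ((s : ℝ) • x') := by
    have : ∑ i ∈ Ω, gi' i
        = ∑ i ∈ Ω, (γ⁻¹ • x + gi i - g - γ⁻¹ • xi' i) := by
      refine Finset.sum_congr rfl fun i hi => ?_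
      rw [hin i hi, hz i hi]
      simp only [smul_sub, smul_add, smul_smul, inv_mul_cancel₀ hγ0, one_smul]
    rw [this]
    simp only [Finset.sum_sub_distrib, Finset.sum_add_distrib, Finset.sum_const, hΩ,
      ← Finset.smul_sum, hxsum]
    rw [← Nat.cast_smul_eq_nsmul ℝ, ← Nat.cast_smul_eq_nsmul ℝ]
  have h2 : ∑ i, gi' i = ∑ i ∈ Ω, gi' i + ∑ i ∈ Ωᶜ, gi' i :=
    (Finset.sum_add_sum_compl Ω gi').symm
  have h3 : ∑ i ∈ Ωᶜ, gi' i = ∑ i ∈ Ωᶜ, gi i :=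
    Finset.sum_congr rfl fun i hi => hout i (Finset.mem_compl.mp hi)
  have h4 : ∑ i ∈ Ω, gi i + ∑ i ∈ Ωᶜ, gi i = (n : ℝ) • g := by
    rw [Finset.sum_add_sum_compl, hsum]
  have h5 : ∑ i, gi' i
      = (s : ℝ) • (γ⁻¹ • x) + (n : ℝ) • g - (s : ℝ) • g - γ⁻¹ • ((s : ℝ) • x') := by
    rw [h2, h3, h1, ← h4]; abel
  rw [h5]
  match_scalars <;> field_simp <;> ring
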